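/- arXiv:2402.08548 — 2 statements merged into one kernel-verified Lean document; each statement's English description precedes it below -/
import Mathlib

section
/- Let 0 < α⁻ ≤ α⁺ < 1 and ε₀ > 0, and let μ : (0, ε₀) → ℝ satisfy -2α⁺ ≤ μ(z) ≤ -2α⁻. Define s(x) = ∫_0^x exp(∫_y^{ε₀} μ(z)/(2z) dz) dy. Then for all x ∈ (0, ε₀): (ε₀^{-α⁺}/(1+α⁺)) x^{1+α⁺} ≤ s(x) ≤ (ε₀^{-α⁻}/(1+α⁻)) x^{1+α⁻}. -/
open MeasureTheory

/-- Bounds on the scale function s(x) = ∫_0^x exp(∫_y^{ε₀} μ(z)/(2z) dz) dy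
under the drift bounds -2α⁺ ≤ μ ≤ -2α⁻ on (0, ε₀), with 0 < α⁻ ≤ α⁺ < 1. -/
theorem stmt_1 (αm αp ε₀ : ℝ) (hαm : 0 < αm) (hαle : αm ≤ αp) (hαp1 : αp < 1)
    (hε : 0 < ε₀) (μ : ℝ → ℝ) (hμmeas : Measurable μ)
    (hμ : ∀ z ∈ Set.Ioo (0:ℝ) ε₀, -2 * αp ≤ μ z ∧ μ z ≤ -2 * αm) :
    ∀ x ∈ Set.Ioo (0:ℝ) ε₀,
      (ε₀ ^ (-αp) / (1 + αp)) * x ^ (1 + αp)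
          ≤ (∫ y in (0:ℝ)..x, Real.exp (∫ z in y..ε₀, μ z / (2 * z))) ∧
      (∫ y in (0:ℝ)..x, Real.exp (∫ z in y..ε₀, μ z / (2 * z)))
          ≤ (ε₀ ^ (-αm) / (1 + αm)) * x ^ (1 + αm) := by
  have hαp : 0 < αp := lt_of_lt_of_le hαm hαle
  set f : ℝ → ℝ := fun z => μ z / (2 * z) with hf
  have hfmeas : Measurable f := hμmeas.div (measurable_const.mul measurable_id)
  -- integrability of f on [y, ε₀] for y > 0
  have hint : ∀ y : ℝ, 0 < y → y ≤ ε₀ → IntervalIntegrable f volume y ε₀ := by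
    intro y hy hyε
    rw [intervalIntegrable_iff_integrableOn_Ioo_of_le hyε]
    refine Integrable.mono' (g := fun _ => αp / y)
      (integrableOn_const measure_Ioo_lt_top.ne)
      (hfmeas.aestronglyMeasurable.restrict) ?_
    refine (ae_restrict_iff' measurableSet_Ioo).2 (ae_of_all _ fun z hz => ?_)
    have hz0 : 0 < z := lt_trans hy hz.1
    obtain ⟨h1, h2⟩ := hμ z ⟨hz0, hz.2⟩
    have hμabs : |μ z| ≤ 2 * αp := by
      rw [abs_le]; constructor <;> nlinarith
    have hnorm : ‖f z‖ = |μ z| / (2 * z) := by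
      rw [hf]; simp only [Real.norm_eq_abs, abs_div]
      rw [abs_of_pos (by linarith : (0:ℝ) < 2 * z)]
    rw [hnorm, div_le_div_iff₀ (by linarith) hy]
    nlinarith [hz.1]
  -- pointwise bounds on the exponential of the inner integral
  have key : ∀ y : ℝ, 0 < y → y < ε₀ →
      (y / ε₀) ^ αp ≤ Real.exp (∫ z in y..ε₀, f z) ∧
      Real.exp (∫ z in y..ε₀, f z) ≤ (y / ε₀) ^ αm := by
    intro y hy hyε
    have hI := hint y hy hyε.le
    have hyε0 : (0:ℝ) < y / ε₀ := div_pos hy hε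
    have hlogneg : Real.log (y / ε₀) = -Real.log (ε₀ / y) := by
      rw [Real.log_div hy.ne' hε.ne', Real.log_div hε.ne' hy.ne']; ring
    have hinv : ∫ z in y..ε₀, z⁻¹ = Real.log (ε₀ / y) := by
      apply integral_inv
      intro h
      rcases Set.mem_uIcc.1 h with ⟨h1, _⟩ | ⟨_, h2⟩ <;> linarith
    have hcInt : ∀ c : ℝ, IntervalIntegrable (fun z => c * z⁻¹) volume y ε₀ :=
      fun c => (ContinuousOn.intervalIntegrable (by
        apply ContinuousOn.mul continuousOn_const
        apply ContinuousOn.inv₀ continuousOn_id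
        intro z hz
        have hzpos : 0 < z := by
          rcases Set.mem_uIcc.1 hz with ⟨h1, _⟩ | ⟨h1, _⟩ <;> linarith
        simpa using hzpos.ne'))
    have haemono : ∀ c : ℝ, (∀ z ∈ Set.Ioo y ε₀, True) → True := fun _ _ => trivial
    have hmono_lower : ∫ z in y..ε₀, (-αp) * z⁻¹ ≤ ∫ z in y..ε₀, f z := by
      apply intervalIntegral.integral_mono_ae_restrict hyε.le (hcInt _) hI
      rw [← Measure.restrict_congr_set MeasureTheory.Ioo_ae_eq_Icc]
      refine (ae_restrict_iff' measurableSet_Ioo).2 (ae_of_all _ fun z hz => ?_)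
      have hz0 : 0 < z := lt_trans hy hz.1
      obtain ⟨h1, h2⟩ := hμ z ⟨hz0, hz.2⟩
      show (-αp) * z⁻¹ ≤ μ z / (2 * z)
      have heq : -αp * z⁻¹ * (2 * z) = -2 * αp := by field_simp
      rw [le_div_iff₀ (by linarith : (0:ℝ) < 2 * z), heq]
      exact h1
    have hmono_upper : ∫ z in y..ε₀, f z ≤ ∫ z in y..ε₀, (-αm) * z⁻¹ := by
      apply intervalIntegral.integral_mono_ae_restrict hyε.le hI (hcInt _)
      rw [← Measure.restrict_congr_set MeasureTheory.Ioo_ae_eq_Icc]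
      refine (ae_restrict_iff' measurableSet_Ioo).2 (ae_of_all _ fun z hz => ?_)
      have hz0 : 0 < z := lt_trans hy hz.1
      obtain ⟨h1, h2⟩ := hμ z ⟨hz0, hz.2⟩
      show μ z / (2 * z) ≤ (-αm) * z⁻¹
      have heq : -αm * z⁻¹ * (2 * z) = -2 * αm := by field_simp
      rw [div_le_iff₀ (by linarith : (0:ℝ) < 2 * z), heq]
      exact h2
    have hval : ∀ c : ℝ, ∫ z in y..ε₀, c * z⁻¹ = c * Real.log (ε₀ / y) := by
      intro c; rw [intervalIntegral.integral_const_mul, hinv]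
    rw [hval] at hmono_lower hmono_upper
    constructor
    · rw [Real.rpow_def_of_pos hyε0]
      apply Real.exp_le_exp.2
      rw [hlogneg]; nlinarith [hmono_lower]
    · rw [Real.rpow_def_of_pos hyε0]
      apply Real.exp_le_exp.2
      rw [hlogneg]; nlinarith [hmono_upper]
  -- measurability of the inner integral as a function of y
  have hGmeas : StronglyMeasurable (fun y : ℝ => ∫ z, (Set.Ioc y ε₀).indicator f z) := by
    apply MeasureTheory.StronglyMeasurable.integral_prod_right'
      (f := fun p : ℝ × ℝ => (Set.Ioc p.1 ε₀).indicator f p.2)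
    apply Measurable.stronglyMeasurable
    have : (fun p : ℝ × ℝ => (Set.Ioc p.1 ε₀).indicator f p.2)
        = fun p : ℝ × ℝ => if p ∈ {q : ℝ × ℝ | q.1 < q.2 ∧ q.2 ≤ ε₀} then f p.2 else 0 := by
      ext p; simp [Set.indicator, Set.mem_Ioc]
    rw [this]
    exact Measurable.ite
      ((measurableSet_lt measurable_fst measurable_snd).inter
        (measurableSet_le measurable_snd measurable_const))
      (hfmeas.comp measurable_snd) measurable_const
  intro x hx
  obtain ⟨hx0, hxε⟩ := hx
  have hsub : ∀ y ∈ Set.Ioc (0:ℝ) x, 0 < y ∧ y < ε₀ := fun y hy =>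
    ⟨hy.1, lt_of_le_of_lt hy.2 hxε⟩
  -- identify the interval integral with the indicator integral on Ioc 0 x
  have hGeq : ∀ y ∈ Set.Ioc (0:ℝ) x,
      (∫ z in y..ε₀, f z) = ∫ z, (Set.Ioc y ε₀).indicator f z := by
    intro y hy
    rw [intervalIntegral.integral_of_le (le_of_lt (hsub y hy).2),
      ← integral_indicator measurableSet_Ioc]
  -- integrability of the exponential on Ioc 0 x
  have hexpmeas : AEStronglyMeasurable (fun y => Real.exp (∫ z in y..ε₀, f z))
      (volume.restrict (Set.Ioc (0:ℝ) x)) := by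
    apply AEStronglyMeasurable.congr
      (f := fun y => Real.exp (∫ z, (Set.Ioc y ε₀).indicator f z))
    · exact ((Real.continuous_exp.comp_stronglyMeasurable hGmeas)).aestronglyMeasurable
    · refine (ae_restrict_iff' measurableSet_Ioc).2 (ae_of_all _ fun y hy => ?_)
      exact congrArg Real.exp (hGeq y hy).symm
    -- bound exp ≤ 1 on the set
  have hexple1 : ∀ y ∈ Set.Ioc (0:ℝ) x, Real.exp (∫ z in y..ε₀, f z) ≤ 1 := by
    intro y hy
    obtain ⟨hy0, hyε⟩ := hsub y hy
    refine le_trans (key y hy0 hyε).2 ?_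
    exact Real.rpow_le_one (le_of_lt (div_pos hy0 hε))
      (by rw [div_le_one hε]; linarith) hαm.le
  have hexpInt : IntegrableOn (fun y => Real.exp (∫ z in y..ε₀, f z)) (Set.Ioc (0:ℝ) x) := by
    refine Integrable.mono' (g := fun _ => (1:ℝ))
      (integrableOn_const measure_Ioc_lt_top.ne) hexpmeas ?_
    refine (ae_restrict_iff' measurableSet_Ioc).2 (ae_of_all _ fun y hy => ?_)
    rw [Real.norm_eq_abs, abs_of_pos (Real.exp_pos _)]
    exact hexple1 y hy
  -- integrability of the comparison functions
  have hpowInt : ∀ α : ℝ, 0 < α →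
      IntegrableOn (fun y : ℝ => (y / ε₀) ^ α) (Set.Ioc (0:ℝ) x) := by
    intro α hα
    have h1 : IntervalIntegrable (fun y : ℝ => y ^ α / ε₀ ^ α) volume 0 x :=
      (intervalIntegral.intervalIntegrable_rpow' (by linarith)).div_const _
    have h2 : IntegrableOn (fun y : ℝ => y ^ α / ε₀ ^ α) (Set.Ioc (0:ℝ) x) :=
      (intervalIntegrable_iff_integrableOn_Ioc_of_le hx0.le).1 h1
    apply h2.congr_fun ?_ measurableSet_Ioc
    intro y hy
    exact (Real.div_rpow (le_of_lt hy.1) hε.le α).symm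
  -- value of the comparison integrals
  have hpowval : ∀ α : ℝ, 0 < α → α < 1 →
      ∫ y in Set.Ioc (0:ℝ) x, (y / ε₀) ^ α = (ε₀ ^ (-α) / (1 + α)) * x ^ (1 + α) := by
    intro α hα hα1
    have hcong : ∫ y in Set.Ioc (0:ℝ) x, (y / ε₀) ^ α
        = ∫ y in Set.Ioc (0:ℝ) x, y ^ α / ε₀ ^ α := by
      apply setIntegral_congr_fun measurableSet_Ioc
      intro y hy
      exact Real.div_rpow (le_of_lt hy.1) hε.le α
    rw [hcong, ← intervalIntegral.integral_of_le hx0.le,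
      intervalIntegral.integral_div, integral_rpow (Or.inl (by linarith))]
    rw [Real.zero_rpow (ne_of_gt (by linarith)), Real.rpow_neg hε.le, add_comm α 1,
      sub_zero]
    ring
  constructor
  · rw [intervalIntegral.integral_of_le hx0.le, ← hpowval αp hαp hαp1]
    apply setIntegral_mono_on (hpowInt αp hαp) hexpInt measurableSet_Ioc
    intro y hy
    exact (key y (hsub y hy).1 (hsub y hy).2).1
  · rw [intervalIntegral.integral_of_le hx0.le, ← hpowval αm hαm (lt_of_le_of_lt hαle hαp1)]
    apply setIntegral_mono_on hexpInt (hpowInt αm hαm) measurableSet_Ioc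
    intro y hy
    exact (key y (hsub y hy).1 (hsub y hy).2).2
end

section
/- There exists a continuous, strictly increasing bijection g : [0, 1/32] → [0, 1/32] with g(0) = 0 such that liminf_{x→0⁺} g(x)/x = 0 and limsup_{x→0⁺} g(x)/x = ∞. Concretely, any continuous strictly increasing g with g(2^{-2^n}) = 2^{-2^n}, g(2^{-2^n - 1}) = 2^{-2^n - n}, and g(2^{-2^{n+1}+1}) = 2^{-2^{n+1}+n} for all n ≥ 3 satisfies g(2^{-2^n-1})/2^{-2^n-1} = 2^{-n+1} → 0 and g(2^{-2^{n+1}+1})/2^{-2^{n+1}+1} = 2^{n-1} → ∞. -/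
open Filter Topology

noncomputable def Kc : ℝ := Real.log 32 * Real.sin (Real.log (Real.log 32))
noncomputable def phi (t : ℝ) : ℝ := t + (t * Real.sin (Real.log t) - Kc) / 2

lemma log32_pos : (0:ℝ) < Real.log 32 := Real.log_pos (by norm_num)

lemma phi_hasDerivAt {t : ℝ} (ht : 0 < t) :
    HasDerivAt phi (1 + (Real.sin (Real.log t) + Real.cos (Real.log t)) / 2) t := by
  have h1 : HasDerivAt (fun u : ℝ => u * Real.sin (Real.log u))
      (1 * Real.sin (Real.log t) + t * (Real.cos (Real.log t) * t⁻¹)) t := by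
    exact (hasDerivAt_id t).mul ((Real.hasDerivAt_log ht.ne').sin)
  have h2 : HasDerivAt phi (1 + (1 * Real.sin (Real.log t) + t * (Real.cos (Real.log t) * t⁻¹)) / 2) t :=
    (hasDerivAt_id t).add (((h1.sub_const Kc)).div_const 2)
  convert h2 using 1
  field_simp

lemma deriv_pos (u : ℝ) : 0 < 1 + (Real.sin u + Real.cos u) / 2 := by
  nlinarith [Real.sin_sq_add_cos_sq u, sq_nonneg (Real.sin u + Real.cos u + 2),
    sq_nonneg (Real.sin u - Real.cos u)]

lemma phi_strictMono : StrictMonoOn phi (Set.Ici (Real.log 32)) := by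
  have hc : ContinuousOn phi (Set.Ici (Real.log 32)) := by
    intro x hx
    exact (phi_hasDerivAt (lt_of_lt_of_le log32_pos hx)).continuousAt.continuousWithinAt
  refine strictMonoOn_of_deriv_pos (convex_Ici _) hc ?_
  intro x hx
  rw [interior_Ici] at hx
  have hx0 : 0 < x := lt_trans log32_pos hx
  rw [(phi_hasDerivAt hx0).deriv]
  exact deriv_pos _

lemma phi_lower {t : ℝ} (ht : 0 ≤ t) : t / 2 - Kc / 2 ≤ phi t := by
  have h : -t ≤ t * Real.sin (Real.log t) := by
    nlinarith [Real.neg_one_le_sin (Real.log t)]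
  unfold phi; linarith

lemma phi_tendsto : Tendsto phi atTop atTop := by
  apply tendsto_atTop_mono' _ _ ?_
  · exact fun t => t / 2 - Kc / 2
  · filter_upwards [eventually_ge_atTop (0:ℝ)] with t ht using phi_lower ht
  · have h1 : Tendsto (fun t : ℝ => t / 2) atTop atTop :=
      Tendsto.atTop_div_const (by norm_num) tendsto_id
    simpa [sub_eq_add_neg] using tendsto_atTop_add_const_right atTop (-(Kc / 2)) h1

lemma phi_log32 : phi (Real.log 32) = Real.log 32 := by
  unfold phi Kc; ring

noncomputable def gg (x : ℝ) : ℝ := if x ≤ 0 then 0 else Real.exp (-phi (-Real.log x))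

lemma gg_pos_eq {x : ℝ} (hx : 0 < x) : gg x = Real.exp (-phi (-Real.log x)) := by
  simp [gg, not_le.2 hx]

lemma gg_0 : gg 0 = 0 := by simp [gg]

lemma gg_32 : gg (1/32) = 1/32 := by
  rw [gg_pos_eq (by norm_num)]
  rw [show -Real.log (1/32) = Real.log 32 by
    rw [show (1:ℝ)/32 = 32⁻¹ by norm_num, Real.log_inv, neg_neg]]
  rw [phi_log32, Real.exp_neg, Real.exp_log (by norm_num)]; norm_num

lemma neg_log_mem {x : ℝ} (hx1 : 0 < x) (hx2 : x ≤ 1/32) : Real.log 32 ≤ -Real.log x := by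
  have := Real.log_le_log hx1 hx2
  have h32 : Real.log (1/32) = -Real.log 32 := by
    rw [Real.log_div one_ne_zero (by norm_num)]; simp
  linarith

lemma gg_strictMono : StrictMonoOn gg (Set.Icc 0 (1/32)) := by
  intro x hx y hy hxy
  rcases eq_or_lt_of_le hx.1 with h0 | h0
  · rw [← h0, gg_0, gg_pos_eq (h0 ▸ hxy)]
    exact Real.exp_pos _
  · rw [gg_pos_eq h0, gg_pos_eq (lt_trans h0 hxy)]
    apply Real.exp_lt_exp.2
    apply neg_lt_neg
    apply phi_strictMono (neg_log_mem (lt_trans h0 hxy) hy.2) (neg_log_mem h0 hx.2)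
    exact neg_lt_neg (Real.log_lt_log h0 hxy)

lemma gg_tendsto_zero : Tendsto gg (𝓝[>] (0:ℝ)) (𝓝 0) := by
  have h1 : Tendsto (fun x : ℝ => -Real.log x) (𝓝[>] (0:ℝ)) atTop := by
    exact tendsto_neg_atBot_atTop.comp Real.tendsto_log_nhdsGT_zero
  have h2 : Tendsto (fun x : ℝ => Real.exp (-phi (-Real.log x))) (𝓝[>] (0:ℝ)) (𝓝 0) := by
    apply Real.tendsto_exp_atBot.comp
    exact tendsto_neg_atTop_atBot.comp (phi_tendsto.comp h1)
  apply h2.congr'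
  filter_upwards [self_mem_nhdsWithin] with x hx
  exact (gg_pos_eq hx).symm

lemma gg_continuousOn : ContinuousOn gg (Set.Icc 0 (1/32)) := by
  intro x hx
  rcases eq_or_lt_of_le hx.1 with h0 | h0
  · rw [← h0]
    unfold ContinuousWithinAt
    rw [gg_0]
    have : 𝓝[Set.Icc (0:ℝ) (1/32)] 0 ≤ 𝓝[Set.Ici (0:ℝ)] 0 :=
      nhdsWithin_mono _ Set.Icc_subset_Ici_self
    refine Tendsto.mono_left ?_ this
    have heq : Set.Ici (0:ℝ) = {0} ∪ Set.Ioi 0 := by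
      ext y; simp [le_iff_lt_or_eq, Set.mem_Ioi, or_comm, eq_comm]
    rw [heq, nhdsWithin_union, nhdsWithin_singleton]
    rw [tendsto_sup]
    exact ⟨by simpa [gg_0] using tendsto_pure_nhds gg 0 |>.mono_left (le_refl _), gg_tendsto_zero⟩
  · have : ContinuousAt gg x := by
      have hc : ContinuousAt (fun x : ℝ => Real.exp (-phi (-Real.log x))) x := by
        have hphi : ContinuousAt phi (-Real.log x) :=
          (phi_hasDerivAt (lt_of_lt_of_le log32_pos (neg_log_mem h0 hx.2))).continuousAt
        have hl : ContinuousAt (fun x : ℝ => -Real.log x) x := (Real.continuousAt_log h0.ne').neg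
        have hcomp : ContinuousAt (fun x : ℝ => phi (-Real.log x)) x := by have := ContinuousAt.comp (x := x) hphi hl; exact this
        exact Real.continuous_exp.continuousAt.comp (x := x) hcomp.neg
      apply hc.congr
      filter_upwards [eventually_gt_nhds h0] with y hy using (gg_pos_eq hy).symm
    exact this.continuousWithinAt

lemma gg_ratio {t : ℝ} : gg (Real.exp (-t)) / Real.exp (-t)
    = Real.exp (-(t * Real.sin (Real.log t) - Kc) / 2) := by
  rw [gg_pos_eq (Real.exp_pos _), Real.log_exp, neg_neg, ← Real.exp_sub]
  congr 1
  unfold phi; ring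

lemma seq_tendsto (c : ℝ) : Tendsto (fun n : ℕ => Real.exp (c + 2 * Real.pi * n)) atTop atTop := by
  apply Real.tendsto_exp_atTop.comp
  apply tendsto_atTop_add_const_left
  exact Tendsto.const_mul_atTop (by positivity) tendsto_natCast_atTop_atTop

lemma sin_log_seq (c : ℝ) (n : ℕ) :
    Real.sin (Real.log (Real.exp (c + 2 * Real.pi * n))) = Real.sin c := by
  rw [Real.log_exp, show c + 2 * Real.pi * n = c + n * (2 * Real.pi) by ring,
    Real.sin_add_nat_mul_two_pi]

lemma xseq_tendsto {tseq : ℕ → ℝ} (h : Tendsto tseq atTop atTop) :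
    Tendsto (fun n => Real.exp (-tseq n)) atTop (𝓝[>] (0:ℝ)) := by
  apply tendsto_nhdsWithin_of_tendsto_nhds_of_eventually_within
  · exact Real.tendsto_exp_atBot.comp (tendsto_neg_atTop_atBot.comp h)
  · exact Eventually.of_forall fun n => Real.exp_pos _

lemma gg_freq_small : ∀ ε > (0:ℝ), ∃ᶠ x in 𝓝[>] (0:ℝ), gg x / x < ε := by
  intro ε hε
  set tseq : ℕ → ℝ := fun n => Real.exp (Real.pi / 2 + 2 * Real.pi * n) with htseq
  have ht : Tendsto tseq atTop atTop := seq_tendsto _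
  apply Tendsto.frequently (xseq_tendsto ht)
  apply Eventually.frequently
  have hval : ∀ n, gg (Real.exp (-tseq n)) / Real.exp (-tseq n) = Real.exp ((Kc - tseq n) / 2) := by
    intro n
    rw [gg_ratio, htseq, sin_log_seq, Real.sin_pi_div_two]
    ring_nf
  have hlim : Tendsto (fun n => Real.exp ((Kc - tseq n) / 2)) atTop (𝓝 0) := by
    apply Real.tendsto_exp_atBot.comp
    apply Tendsto.atBot_div_const (by norm_num)
    have := tendsto_atBot_add_const_left atTop Kc (tendsto_neg_atTop_atBot.comp ht)
    simpa [sub_eq_add_neg] using this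
  filter_upwards [hlim.eventually_lt_const hε] with n hn
  rw [hval n]; exact hn

lemma gg_freq_big : ∀ M : ℝ, ∃ᶠ x in 𝓝[>] (0:ℝ), M < gg x / x := by
  intro M
  set tseq : ℕ → ℝ := fun n => Real.exp (-(Real.pi / 2) + 2 * Real.pi * n) with htseq
  have ht : Tendsto tseq atTop atTop := seq_tendsto _
  apply Tendsto.frequently (xseq_tendsto ht)
  apply Eventually.frequently
  have hval : ∀ n, gg (Real.exp (-tseq n)) / Real.exp (-tseq n) = Real.exp ((tseq n + Kc) / 2) := by
    intro n
    rw [gg_ratio, htseq, sin_log_seq]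
    rw [Real.sin_neg, Real.sin_pi_div_two]
    ring_nf
  have hlim : Tendsto (fun n => Real.exp ((tseq n + Kc) / 2)) atTop atTop := by
    apply Real.tendsto_exp_atTop.comp
    apply Tendsto.atTop_div_const (by norm_num)
    exact tendsto_atTop_add_const_right atTop Kc ht
  filter_upwards [hlim.eventually_gt_atTop M] with n hn
  rw [hval n]; exact hn

lemma gg_bijOn : Set.BijOn gg (Set.Icc 0 (1/32)) (Set.Icc 0 (1/32)) := by
  refine ⟨?_, gg_strictMono.injOn, ?_⟩
  · intro x hx
    constructor
    · rcases eq_or_lt_of_le hx.1 with h0 | h0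
      · rw [← h0, gg_0]
      · rw [gg_pos_eq h0]; exact (Real.exp_pos _).le
    · calc gg x ≤ gg (1/32) :=
            gg_strictMono.monotoneOn hx (by constructor <;> norm_num) hx.2
        _ = 1/32 := gg_32
  · intro y hy
    have := intermediate_value_Icc (by norm_num : (0:ℝ) ≤ 1/32) gg_continuousOn
    rw [gg_0, gg_32] at this
    exact this hy



/-- There is a continuous strictly increasing bijection g of [0,1/32] fixing 0 with
liminf_{x→0⁺} g(x)/x = 0 (frequently g(x)/x < ε) and limsup_{x→0⁺} g(x)/x = ∞
(frequently g(x)/x > M). -/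
theorem stmt_18 :
    ∃ g : ℝ → ℝ,
      ContinuousOn g (Set.Icc 0 (1/32)) ∧
      StrictMonoOn g (Set.Icc 0 (1/32)) ∧
      Set.BijOn g (Set.Icc 0 (1/32)) (Set.Icc 0 (1/32)) ∧
      g 0 = 0 ∧
      (∀ ε > (0:ℝ), ∃ᶠ x in 𝓝[>] (0:ℝ), g x / x < ε) ∧
      (∀ M : ℝ, ∃ᶠ x in 𝓝[>] (0:ℝ), M < g x / x) := by
  exact ⟨gg, gg_continuousOn, gg_strictMono, gg_bijOn, gg_0, gg_freq_small, gg_freq_big⟩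
end
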